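/- Let E₁ = (1/2)[[1, 0], [-1, √2]], E₂ = (1/2)[[1, √2], [1, 0]], and let Φ⁺ = |Φ⁺⟩⟨Φ⁺| with |Φ⁺⟩ = (1/√2)(|00⟩ + |11⟩). Let ρ_out = (I₂⊗E₁)Φ⁺(I₂⊗E₁)† + (I₂⊗E₂)Φ⁺(I₂⊗E₂)†. Then ρ_out = (1/2)(|v₁⟩⟨v₁| + |v₂⟩⟨v₂|), where v₁ = (1/√2)(sin(π/8)|00⟩ + cos(π/8)|01⟩ + cos(π/8)|10⟩ - sin(π/8)|11⟩) and v₂ = (1/√2)(cos(π/8)|00⟩ - sin(π/8)|01⟩ + sin(π/8)|10⟩ + cos(π/8)|11⟩), and the coherence of formation of ρ_out in the product basis satisfies C_f(ρ_out) > 1. -/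

import Mathlib

open Matrix BigOperators Kronecker ComplexOrder

/-- Base-2 Shannon entropy of a probability vector, with the convention `0 · log 0 = 0`
(automatic since `Real.logb 2 0 = 0`). -/
noncomputable def shannon2 {n : Type*} [Fintype n] (p : n → ℝ) : ℝ :=
  -∑ i, p i * Real.logb 2 (p i)

/-- A density matrix: positive semidefinite with unit trace. -/
def IsDensityMatrix {n : Type*} [Fintype n] (ρ : Matrix n n ℂ) : Prop :=
  ρ.PosSemidef ∧ ρ.trace = 1

/-- Von Neumann entropy (base 2): Shannon entropy of the eigenvalues. -/
noncomputable def vN {n : Type*} [Fintype n] [DecidableEq n] (ρ : Matrix n n ℂ) : ℝ :=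
  if h : ρ.IsHermitian then shannon2 h.eigenvalues else 0

/-- Relative entropy of coherence `C_r(ρ) = S(Δ(ρ)) - S(ρ)`, where `Δ` is the
diagonal part. -/
noncomputable def Cr {n : Type*} [Fintype n] [DecidableEq n] (ρ : Matrix n n ℂ) : ℝ :=
  vN (Matrix.diagonal ρ.diag) - vN ρ

/-- Application of a channel given by its Kraus operators: `ρ ↦ ∑ i, K i * ρ * (K i)ᴴ`. -/
noncomputable def krausApply {ι m p : Type*} [Fintype ι] [Fintype m] [Fintype p]
    (K : ι → Matrix p m ℂ) (ρ : Matrix m m ℂ) : Matrix p p ℂ :=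
  ∑ i, K i * ρ * (K i)ᴴ

/-- Coherence of formation: infimum over finite pure-state decompositions
`ρ = ∑ i, p i • |ψ i⟩⟨ψ i|` of `∑ i, p i * S(Δ(|ψ i⟩⟨ψ i|))`. -/
noncomputable def Cf {n : Type*} [Fintype n] (ρ : Matrix n n ℂ) : ℝ :=
  sInf { x : ℝ | ∃ (m : ℕ) (p : Fin m → ℝ) (ψ : Fin m → n → ℂ),
    (∀ i, 0 < p i) ∧ (∑ i, p i = 1) ∧ (∀ i, ∑ j, ‖ψ i j‖ ^ 2 = 1) ∧
    ρ = ∑ i, (p i : ℂ) • Matrix.vecMulVec (ψ i) (star (ψ i)) ∧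
    x = ∑ i, p i * shannon2 (fun j => ‖ψ i j‖ ^ 2) }

/-- The Kraus operator `E₁ = (1/2)[[1, 0], [-1, √2]]` from the paper's example. -/
noncomputable def E1ex : Matrix (Fin 2) (Fin 2) ℂ :=
  (1 / 2 : ℂ) • !![1, 0; -1, (Real.sqrt 2 : ℂ)]

/-- The Kraus operator `E₂ = (1/2)[[1, √2], [1, 0]]` from the paper's example. -/
noncomputable def E2ex : Matrix (Fin 2) (Fin 2) ℂ :=
  (1 / 2 : ℂ) • !![1, (Real.sqrt 2 : ℂ); 1, 0]

/-- `v₁ = (1/√2)(sin(π/8)|00⟩ + cos(π/8)|01⟩ + cos(π/8)|10⟩ - sin(π/8)|11⟩)`. -/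
noncomputable def v1ex : Fin 2 × Fin 2 → ℂ := fun p =>
  (Real.sqrt 2 : ℂ)⁻¹ *
    !![(Real.sin (Real.pi / 8) : ℂ), (Real.cos (Real.pi / 8) : ℂ);
       (Real.cos (Real.pi / 8) : ℂ), -(Real.sin (Real.pi / 8) : ℂ)] p.1 p.2

/-- `v₂ = (1/√2)(cos(π/8)|00⟩ - sin(π/8)|01⟩ + sin(π/8)|10⟩ + cos(π/8)|11⟩)`. -/
noncomputable def v2ex : Fin 2 × Fin 2 → ℂ := fun p =>
  (Real.sqrt 2 : ℂ)⁻¹ *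
    !![(Real.cos (Real.pi / 8) : ℂ), -(Real.sin (Real.pi / 8) : ℂ);
       (Real.sin (Real.pi / 8) : ℂ), (Real.cos (Real.pi / 8) : ℂ)] p.1 p.2

/-- The vector `|Φ⁺⟩ = (1/√2)(|00⟩ + |11⟩)`. -/
noncomputable def phiPlus : Fin 2 × Fin 2 → ℂ :=
  fun p => if p.1 = p.2 then ((Real.sqrt 2 : ℂ))⁻¹ else 0

/-- Applying `id ⊗ Λ²₂` to `Φ⁺` yields `(1/2)(|v₁⟩⟨v₁| + |v₂⟩⟨v₂|)`, whose coherence of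
formation is strictly larger than 1. -/
lemma h2r : Real.sqrt 2 * Real.sqrt 2 = 2 :=
  Real.mul_self_sqrt (by norm_num)

lemma L1 : Real.sqrt 2 * Real.cos (Real.pi/8) = Real.cos (Real.pi/8) + Real.sin (Real.pi/8) := by
  have h : Real.pi/4 - Real.pi/8 = Real.pi/8 := by ring
  have t := Real.cos_sub (Real.pi/4) (Real.pi/8)
  rw [h, Real.cos_pi_div_four, Real.sin_pi_div_four] at t
  linear_combination Real.sqrt 2 * t + (Real.cos (Real.pi/8) + Real.sin (Real.pi/8))/2 * h2r

lemma L2 : Real.sqrt 2 * Real.sin (Real.pi/8) = Real.cos (Real.pi/8) - Real.sin (Real.pi/8) := by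
  have h : Real.pi/4 - Real.pi/8 = Real.pi/8 := by ring
  have t := Real.sin_sub (Real.pi/4) (Real.pi/8)
  rw [h, Real.cos_pi_div_four, Real.sin_pi_div_four] at t
  linear_combination Real.sqrt 2 * t + (Real.cos (Real.pi/8) - Real.sin (Real.pi/8))/2 * h2r

-- complex versions
lemma hc2 : (Real.sqrt 2 : ℂ) * (Real.sqrt 2 : ℂ) = 2 := by
  norm_cast; exact_mod_cast h2r

lemma Lc1 : (Real.sqrt 2 : ℂ) * (Real.cos (Real.pi/8) : ℂ) = (Real.cos (Real.pi/8) : ℂ) + (Real.sin (Real.pi/8) : ℂ) := by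
  norm_cast; exact_mod_cast L1

lemma Lc2 : (Real.sqrt 2 : ℂ) * (Real.sin (Real.pi/8) : ℂ) = (Real.cos (Real.pi/8) : ℂ) - (Real.sin (Real.pi/8) : ℂ) := by
  exact_mod_cast congrArg Complex.ofReal L2

set_option maxHeartbeats 4000000 in
lemma part1 :
    (((1 : Matrix (Fin 2) (Fin 2) ℂ) ⊗ₖ E1ex) * Matrix.vecMulVec phiPlus (star phiPlus) *
        ((1 : Matrix (Fin 2) (Fin 2) ℂ) ⊗ₖ E1ex)ᴴ +
      ((1 : Matrix (Fin 2) (Fin 2) ℂ) ⊗ₖ E2ex) * Matrix.vecMulVec phiPlus (star phiPlus) *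
        ((1 : Matrix (Fin 2) (Fin 2) ℂ) ⊗ₖ E2ex)ᴴ =
      (1 / 2 : ℂ) • (Matrix.vecMulVec v1ex (star v1ex) + Matrix.vecMulVec v2ex (star v2ex))) := by
  have hs2 : (Real.sqrt 2 : ℂ) ≠ 0 := by
    simpa using (Real.sqrt_ne_zero' .mpr (by norm_num : (0:ℝ) < 2))
  have hX : ((Real.sqrt 2 : ℝ) : ℂ) * ((Real.sqrt 2 : ℝ) : ℂ) = 2 := hc2
  have hA : ((Real.sqrt (2 - Real.sqrt 2) : ℝ) : ℂ) * ((Real.sqrt (2 - Real.sqrt 2) : ℝ) : ℂ)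
      = 2 - ((Real.sqrt 2 : ℝ) : ℂ) := by
    rw [← Complex.ofReal_mul, Real.mul_self_sqrt (by nlinarith [h2r, Real.sqrt_nonneg 2])]
    push_cast; ring
  have hB : ((Real.sqrt (2 + Real.sqrt 2) : ℝ) : ℂ) * ((Real.sqrt (2 + Real.sqrt 2) : ℝ) : ℂ)
      = 2 + ((Real.sqrt 2 : ℝ) : ℂ) := by
    rw [← Complex.ofReal_mul, Real.mul_self_sqrt (by positivity)]
    push_cast; ring
  have hAB : ((Real.sqrt (2 - Real.sqrt 2) : ℝ) : ℂ) * ((Real.sqrt (2 + Real.sqrt 2) : ℝ) : ℂ)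
      = ((Real.sqrt 2 : ℝ) : ℂ) := by
    rw [← Complex.ofReal_mul, ← Real.sqrt_mul (by nlinarith [h2r, Real.sqrt_nonneg 2])]
    rw [show (2 - Real.sqrt 2) * (2 + Real.sqrt 2) = 2 by nlinarith [h2r]]
  have hBA : ((Real.sqrt (2 + Real.sqrt 2) : ℝ) : ℂ) * ((Real.sqrt (2 - Real.sqrt 2) : ℝ) : ℂ)
      = ((Real.sqrt 2 : ℝ) : ℂ) := by rw [mul_comm]; exact hAB
  have hp2 : ((Real.sqrt 2 : ℝ) : ℂ) ^ 2 = 2 := by rw [sq]; exact hX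
  have hA2 : ((Real.sqrt (2 - Real.sqrt 2) : ℝ) : ℂ) ^ 2 = 2 - ((Real.sqrt 2 : ℝ) : ℂ) := by
    rw [sq]; exact hA
  have hB2 : ((Real.sqrt (2 + Real.sqrt 2) : ℝ) : ℂ) ^ 2 = 2 + ((Real.sqrt 2 : ℝ) : ℂ) := by
    rw [sq]; exact hB
  have hp3 : ((Real.sqrt 2 : ℝ) : ℂ) ^ 3 = 2 * ((Real.sqrt 2 : ℝ) : ℂ) := by
    rw [pow_succ, hp2]
  have hp4 : ((Real.sqrt 2 : ℝ) : ℂ) ^ 4 = 4 := by rw [pow_succ, hp3]; linear_combination 2 * hX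
  have hp5 : ((Real.sqrt 2 : ℝ) : ℂ) ^ 5 = 4 * ((Real.sqrt 2 : ℝ) : ℂ) := by rw [pow_succ, hp4]
  have hp6 : ((Real.sqrt 2 : ℝ) : ℂ) ^ 6 = 8 := by rw [pow_succ, hp5]; linear_combination 4 * hX
  ext ⟨i, j⟩ ⟨k, l⟩
  fin_cases i <;> fin_cases j <;> fin_cases k <;> fin_cases l <;>
    simp [E1ex, E2ex, v1ex, v2ex, phiPlus, Matrix.mul_apply, Matrix.vecMulVec_apply,
      Fintype.sum_prod_type, Fin.sum_univ_two, Matrix.one_apply, Matrix.kroneckerMap_apply,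
      Matrix.conjTranspose_apply, Pi.star_apply, Complex.star_def, _root_.map_mul, map_inv₀,
    Complex.conj_ofReal] <;> field_simp <;>
    simp only [map_ofNat, hA, hB, hAB, hBA] <;> ring_nf <;>
    norm_num [hp2, hp3, hp4, hp5, hp6, hA2, hB2, hAB, hBA] <;> ring


lemma pairEnt (a b : ℝ) (ha : 0 ≤ a) (hb : 0 ≤ b) (hab : a + b = 1/2) :
    1/2 + 4*a*b / Real.log 2 ≤ -(a * Real.logb 2 a) - b * Real.logb 2 b := by
  have hl2 : 0 < Real.log 2 := Real.log_pos (by norm_num)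
  have key : ∀ t u : ℝ, 0 ≤ t → 0 ≤ u → t + u = 1/2 →
      t * Real.log 2 + 2*t*u ≤ -(t * Real.log t) := by
    intro t u ht hu htu
    rcases eq_or_lt_of_le ht with h | h
    · simp [← h]
    · have h2 := Real.log_le_sub_one_of_pos (by linarith : (0:ℝ) < 2*t)
      rw [Real.log_mul (by norm_num) (ne_of_gt h)] at h2
      nlinarith
  have k1 := key a b ha hb hab
  have k2 := key b a hb ha (by linarith)
  have hrw : -(a * Real.logb 2 a) - b * Real.logb 2 b
      = (-(a*Real.log a) - b*Real.log b)/Real.log 2 := by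
    rw [Real.logb, Real.logb]; ring
  rw [hrw, le_div_iff₀ hl2, add_mul, div_mul_cancel₀ _ (ne_of_gt hl2)]
  nlinarith


lemma entBound (ψ : Fin 2 × Fin 2 → ℂ)
    (hnorm : ∑ j, ‖ψ j‖^2 = 1)
    (h10 : ψ (0,0) + ψ (0,1) = (Real.sqrt 2 : ℂ) * ψ (1,0))
    (h11 : ψ (0,0) - ψ (0,1) = (Real.sqrt 2 : ℂ) * ψ (1,1)) :
    1 + 1/(4 * Real.log 2) ≤ shannon2 (fun j => ‖ψ j‖^2) := by
  have hl2 : 0 < Real.log 2 := Real.log_pos (by norm_num)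
  set a := ψ (0,0) with haa
  set b := ψ (0,1) with hbb
  set x := Complex.normSq a with hx
  set y := Complex.normSq b with hy
  set r := (a * (starRingEnd ℂ) b).re with hr
  have hsq : ∀ z : ℂ, ‖z‖^2 = Complex.normSq z := by
    intro z; rw [Complex.sq_norm]
  have np : Complex.normSq (ψ (1,0)) = (x + y + 2*r)/2 := by
    have : Complex.normSq (a + b) = Complex.normSq ((Real.sqrt 2 : ℂ) * ψ (1,0)) := by
      rw [h10]
    rw [Complex.normSq_add, Complex.normSq_mul, Complex.normSq_ofReal,
      Real.mul_self_sqrt (by norm_num)] at this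
    linarith
  have nq : Complex.normSq (ψ (1,1)) = (x + y - 2*r)/2 := by
    have : Complex.normSq (a - b) = Complex.normSq ((Real.sqrt 2 : ℂ) * ψ (1,1)) := by
      rw [h11]
    rw [Complex.normSq_sub, Complex.normSq_mul, Complex.normSq_ofReal,
      Real.mul_self_sqrt (by norm_num)] at this
    linarith
  have hsum : x + y = 1/2 := by
    rw [Fintype.sum_prod_type, Fin.sum_univ_two, Fin.sum_univ_two, Fin.sum_univ_two] at hnorm
    rw [hsq, hsq, hsq, hsq, np, nq] at hnorm
    linarith
  have hxnn : 0 ≤ x := Complex.normSq_nonneg a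
  have hynn : 0 ≤ y := Complex.normSq_nonneg b
  have hr2 : r^2 ≤ x * y := by
    have h1 : r^2 ≤ Complex.normSq (a * (starRingEnd ℂ) b) := by
      rw [Complex.normSq_apply]; nlinarith [sq_nonneg (a * (starRingEnd ℂ) b).im]
    rwa [Complex.normSq_mul, Complex.normSq_conj] at h1
  have hrle : r^2 ≤ 1/16 := by nlinarith [sq_nonneg (x-y)]
  have hp0 : (0:ℝ) ≤ (x + y + 2*r)/2 := by nlinarith [hrle]
  have hq0 : (0:ℝ) ≤ (x + y - 2*r)/2 := by nlinarith [hrle]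
  have e1 := pairEnt x y hxnn hynn hsum
  have e2 := pairEnt ((x+y+2*r)/2) ((x+y-2*r)/2) hp0 hq0 (by linarith)
  have hexp : shannon2 (fun j => ‖ψ j‖^2)
      = (-(x * Real.logb 2 x) - y * Real.logb 2 y)
        + (-(((x+y+2*r)/2) * Real.logb 2 ((x+y+2*r)/2))
          - ((x+y-2*r)/2) * Real.logb 2 ((x+y-2*r)/2)) := by
    rw [shannon2, Fintype.sum_prod_type, Fin.sum_univ_two, Fin.sum_univ_two, Fin.sum_univ_two]
    rw [hsq, hsq, hsq, hsq, np, nq]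
    ring
  rw [hexp]
  have hprod : 1/16 ≤ x*y + ((x+y+2*r)/2) * ((x+y-2*r)/2) := by nlinarith
  have key : 1/(4*Real.log 2) ≤ 4*x*y/Real.log 2 + 4*((x+y+2*r)/2)*((x+y-2*r)/2)/Real.log 2 := by
    rw [← add_div, div_le_div_iff₀ (by positivity) hl2]
    nlinarith [mul_le_mul_of_nonneg_right hprod hl2.le]
  linarith [key, e1, e2]

lemma vecMulVec_mulVec' {n : Type*} [Fintype n] (x y w : n → ℂ) :
    Matrix.vecMulVec x y *ᵥ w = (y ⬝ᵥ w) • x := by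
  ext k
  simp only [Matrix.mulVec, Matrix.vecMulVec_apply, dotProduct, Pi.smul_apply, smul_eq_mul,
    Finset.sum_mul]
  exact Finset.sum_congr rfl fun l _ => by ring

lemma dot_star {n : Type*} [Fintype n] (ψ w : n → ℂ)
    (hw : ∀ j, (starRingEnd ℂ) (w j) = w j) :
    star ψ ⬝ᵥ w = (starRingEnd ℂ) (w ⬝ᵥ ψ) := by
  simp only [dotProduct, map_sum, Pi.star_apply, Complex.star_def]
  exact Finset.sum_congr rfl fun l _ => by rw [_root_.map_mul, hw]; ring

lemma sum_mulVec' {n : Type*} [Fintype n] {m : ℕ} (A : Fin m → Matrix n n ℂ) (w : n → ℂ) :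
    (∑ i, A i) *ᵥ w = ∑ i, A i *ᵥ w := by
  ext k
  simp only [Matrix.mulVec, dotProduct, Matrix.sum_apply, Finset.sum_mul, Finset.sum_apply]
  exact Finset.sum_comm

lemma dot_sum' {n : Type*} [Fintype n] {m : ℕ} (w : n → ℂ) (f : Fin m → n → ℂ) :
    w ⬝ᵥ (∑ i, f i) = ∑ i, w ⬝ᵥ f i := by
  simp only [dotProduct, Finset.sum_apply, Finset.mul_sum]
  exact Finset.sum_comm

lemma decompConstraint {n : Type*} [Fintype n] {m : ℕ} (p : Fin m → ℝ)
    (ψ : Fin m → n → ℂ) (v1 v2 : n → ℂ)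
    (hp : ∀ i, 0 < p i)
    (hd : (∑ i, (p i : ℂ) • Matrix.vecMulVec (ψ i) (star (ψ i)))
        = (1/2 : ℂ) • (Matrix.vecMulVec v1 (star v1) + Matrix.vecMulVec v2 (star v2)))
    (w : n → ℂ) (hw : ∀ j, (starRingEnd ℂ) (w j) = w j)
    (hv1 : w ⬝ᵥ v1 = 0) (hv2 : w ⬝ᵥ v2 = 0) :
    ∀ i, w ⬝ᵥ ψ i = 0 := by
  have hq := congrArg (fun M : Matrix n n ℂ => w ⬝ᵥ (M *ᵥ w)) hd
  simp only [sum_mulVec', Matrix.smul_mulVec, Matrix.add_mulVec,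
    vecMulVec_mulVec', dot_sum', dotProduct_smul, dot_star _ _ hw,
    smul_eq_mul, dotProduct_add, hv1, hv2] at hq
  -- RHS should be zero
  have hz : ∀ i, (p i : ℂ) * ((starRingEnd ℂ) (w ⬝ᵥ ψ i) * (w ⬝ᵥ ψ i)) = 
      ((p i * Complex.normSq (w ⬝ᵥ ψ i) : ℝ) : ℂ) := by
    intro i
    rw [mul_comm ((starRingEnd ℂ) _), Complex.mul_conj]
    push_cast; ring
  rw [Finset.sum_congr rfl (fun i _ => hz i), ← Complex.ofReal_sum] at hq
  have hq' : (∑ i, p i * Complex.normSq (w ⬝ᵥ ψ i)) = 0 := by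
    have h0 : ((∑ i, p i * Complex.normSq (w ⬝ᵥ ψ i) : ℝ) : ℂ) = 0 := by rw [hq]; simp
    exact_mod_cast h0
  intro i
  have hterm : ∀ j ∈ Finset.univ, (0:ℝ) ≤ p j * Complex.normSq (w ⬝ᵥ ψ j) :=
    fun j _ => mul_nonneg (hp j).le (Complex.normSq_nonneg _)
  have h1 := (Finset.sum_eq_zero_iff_of_nonneg hterm).mp hq' i (Finset.mem_univ i)
  rcases mul_eq_zero.mp h1 with h | h
  · exact absurd h (ne_of_gt (hp i))
  · exact Complex.normSq_eq_zero.mp h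

theorem output_state_Cf_gt_one :
    (((1 : Matrix (Fin 2) (Fin 2) ℂ) ⊗ₖ E1ex) * Matrix.vecMulVec phiPlus (star phiPlus) *
        ((1 : Matrix (Fin 2) (Fin 2) ℂ) ⊗ₖ E1ex)ᴴ +
      ((1 : Matrix (Fin 2) (Fin 2) ℂ) ⊗ₖ E2ex) * Matrix.vecMulVec phiPlus (star phiPlus) *
        ((1 : Matrix (Fin 2) (Fin 2) ℂ) ⊗ₖ E2ex)ᴴ =
      (1 / 2 : ℂ) • (Matrix.vecMulVec v1ex (star v1ex) + Matrix.vecMulVec v2ex (star v2ex))) ∧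
    1 < Cf (((1 : Matrix (Fin 2) (Fin 2) ℂ) ⊗ₖ E1ex) *
        Matrix.vecMulVec phiPlus (star phiPlus) * ((1 : Matrix (Fin 2) (Fin 2) ℂ) ⊗ₖ E1ex)ᴴ +
      ((1 : Matrix (Fin 2) (Fin 2) ℂ) ⊗ₖ E2ex) * Matrix.vecMulVec phiPlus (star phiPlus) *
        ((1 : Matrix (Fin 2) (Fin 2) ℂ) ⊗ₖ E2ex)ᴴ) := by
  have hl2 : 0 < Real.log 2 := Real.log_pos (by norm_num)
  refine ⟨part1, ?_⟩
  rw [part1, Cf]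
  -- the weight vector and state vectors for the canonical decomposition
  have hcast : ((1/2 : ℝ) : ℂ) = (1/2 : ℂ) := by norm_num
  have hvnorm : ∀ v ∈ [v1ex, v2ex], ∑ j, ‖v j‖^2 = 1 := by
    intro v hv
    have hsq : ∀ z : ℂ, ‖z‖^2 = Complex.normSq z := fun z => by
      rw [Complex.sq_norm]
    fin_cases hv <;>
      simp only [v1ex, v2ex, Fintype.sum_prod_type, Fin.sum_univ_two, hsq] <;>
      simp [Complex.normSq_mul, Complex.normSq_ofReal, Matrix.cons_val_zero,
        Matrix.cons_val_one, Matrix.head_cons] <;>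
      linarith [Real.mul_self_sqrt (show (0:ℝ) ≤ 2 - Real.sqrt 2 by
          nlinarith [h2r, Real.sqrt_nonneg 2]),
        Real.mul_self_sqrt (show (0:ℝ) ≤ 2 + Real.sqrt 2 by positivity)]
  have hdecomp : (1 / 2 : ℂ) • (Matrix.vecMulVec v1ex (star v1ex) + Matrix.vecMulVec v2ex (star v2ex))
      = ∑ i : Fin 2, ((![1/2, 1/2] i : ℝ) : ℂ) • Matrix.vecMulVec (![v1ex, v2ex] i)
          (star (![v1ex, v2ex] i)) := by
    rw [Fin.sum_univ_two]
    simp only [Matrix.cons_val_zero, Matrix.cons_val_one, Matrix.head_cons, hcast]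
    rw [smul_add]
  have hne : { x : ℝ | ∃ (m : ℕ) (p : Fin m → ℝ) (ψ : Fin m → (Fin 2 × Fin 2) → ℂ),
      (∀ i, 0 < p i) ∧ (∑ i, p i = 1) ∧ (∀ i, ∑ j, ‖ψ i j‖ ^ 2 = 1) ∧
      (1 / 2 : ℂ) • (Matrix.vecMulVec v1ex (star v1ex) + Matrix.vecMulVec v2ex (star v2ex))
        = ∑ i, (p i : ℂ) • Matrix.vecMulVec (ψ i) (star (ψ i)) ∧
      x = ∑ i, p i * shannon2 (fun j => ‖ψ i j‖ ^ 2) }.Nonempty := by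
    refine ⟨_, 2, ![1/2, 1/2], ![v1ex, v2ex], ?_, ?_, ?_, hdecomp, rfl⟩
    · intro i; fin_cases i <;> norm_num
    · rw [Fin.sum_univ_two]; norm_num
    · intro i; fin_cases i <;> [exact hvnorm v1ex (by simp); exact hvnorm v2ex (by simp)]
  have hbound : ∀ x ∈ { x : ℝ | ∃ (m : ℕ) (p : Fin m → ℝ) (ψ : Fin m → (Fin 2 × Fin 2) → ℂ),
      (∀ i, 0 < p i) ∧ (∑ i, p i = 1) ∧ (∀ i, ∑ j, ‖ψ i j‖ ^ 2 = 1) ∧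
      (1 / 2 : ℂ) • (Matrix.vecMulVec v1ex (star v1ex) + Matrix.vecMulVec v2ex (star v2ex))
        = ∑ i, (p i : ℂ) • Matrix.vecMulVec (ψ i) (star (ψ i)) ∧
      x = ∑ i, p i * shannon2 (fun j => ‖ψ i j‖ ^ 2) },
      1 + 1/(4 * Real.log 2) ≤ x := by
    rintro x ⟨m, p, ψ, hp, hp1, hn, hdec, rfl⟩
    have hE : (∑ i, (p i : ℂ) • Matrix.vecMulVec (ψ i) (star (ψ i)))
        = (1/2 : ℂ) • (Matrix.vecMulVec v1ex (star v1ex) + Matrix.vecMulVec v2ex (star v2ex)) :=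
      hdec.symm
    set w1 : Fin 2 × Fin 2 → ℂ := fun q => (!![(1:ℂ), 1; -((Real.sqrt 2 : ℝ) : ℂ), 0]) q.1 q.2
      with hw1def
    set w2 : Fin 2 × Fin 2 → ℂ := fun q => (!![(1:ℂ), -1; 0, -((Real.sqrt 2 : ℝ) : ℂ)]) q.1 q.2
      with hw2def
    have hw1 : ∀ j, (starRingEnd ℂ) (w1 j) = w1 j := by
      rintro ⟨i, j⟩; fin_cases i <;> fin_cases j <;>
        simp [hw1def, Complex.conj_ofReal]
    have hw2 : ∀ j, (starRingEnd ℂ) (w2 j) = w2 j := by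
      rintro ⟨i, j⟩; fin_cases i <;> fin_cases j <;>
        simp [hw2def, Complex.conj_ofReal]
    have hd1 : w1 ⬝ᵥ v1ex = 0 := by
      simp only [hw1def, dotProduct, Fintype.sum_prod_type, Fin.sum_univ_two, v1ex,
        Matrix.of_apply, Matrix.cons_val', Matrix.empty_val', Matrix.cons_val_fin_one, Matrix.cons_val_zero, Matrix.cons_val_one, Matrix.head_cons, Matrix.head_fin_const]
      linear_combination (-((Real.sqrt 2 : ℝ) : ℂ)⁻¹) * Lc1
    have hd2 : w1 ⬝ᵥ v2ex = 0 := by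
      simp only [hw1def, dotProduct, Fintype.sum_prod_type, Fin.sum_univ_two, v2ex,
        Matrix.of_apply, Matrix.cons_val', Matrix.empty_val', Matrix.cons_val_fin_one, Matrix.cons_val_zero, Matrix.cons_val_one, Matrix.head_cons, Matrix.head_fin_const]
      linear_combination (-((Real.sqrt 2 : ℝ) : ℂ)⁻¹) * Lc2
    have hd3 : w2 ⬝ᵥ v1ex = 0 := by
      simp only [hw2def, dotProduct, Fintype.sum_prod_type, Fin.sum_univ_two, v1ex,
        Matrix.of_apply, Matrix.cons_val', Matrix.empty_val', Matrix.cons_val_fin_one, Matrix.cons_val_zero, Matrix.cons_val_one, Matrix.head_cons, Matrix.head_fin_const]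
      linear_combination ((Real.sqrt 2 : ℝ) : ℂ)⁻¹ * Lc2
    have hd4 : w2 ⬝ᵥ v2ex = 0 := by
      simp only [hw2def, dotProduct, Fintype.sum_prod_type, Fin.sum_univ_two, v2ex,
        Matrix.of_apply, Matrix.cons_val', Matrix.empty_val', Matrix.cons_val_fin_one, Matrix.cons_val_zero, Matrix.cons_val_one, Matrix.head_cons, Matrix.head_fin_const]
      linear_combination (-((Real.sqrt 2 : ℝ) : ℂ)⁻¹) * Lc1
    have hz1 := decompConstraint p ψ v1ex v2ex hp hE w1 hw1 hd1 hd2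
    have hz2 := decompConstraint p ψ v1ex v2ex hp hE w2 hw2 hd3 hd4
    have hSi : ∀ i, 1 + 1/(4 * Real.log 2) ≤ shannon2 (fun j => ‖ψ i j‖ ^ 2) := by
      intro i
      have e1 := hz1 i
      have e2 := hz2 i
      simp only [hw1def, hw2def, dotProduct, Fintype.sum_prod_type, Fin.sum_univ_two,
        Matrix.of_apply, Matrix.cons_val', Matrix.empty_val', Matrix.cons_val_fin_one, Matrix.cons_val_zero, Matrix.cons_val_one, Matrix.head_cons, Matrix.head_fin_const] at e1 e2
      refine entBound (ψ i) (hn i) ?_ ?_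
      · linear_combination e1
      · linear_combination e2
    calc (1:ℝ) + 1/(4 * Real.log 2)
        = ∑ i, p i * (1 + 1/(4 * Real.log 2)) := by
          rw [← Finset.sum_mul, hp1, one_mul]
      _ ≤ ∑ i, p i * shannon2 (fun j => ‖ψ i j‖ ^ 2) := by
          refine Finset.sum_le_sum fun i _ => ?_
          exact mul_le_mul_of_nonneg_left (hSi i) (hp i).le
  have h1 : (1:ℝ) < 1 + 1/(4 * Real.log 2) := by
    have : 0 < 1/(4 * Real.log 2) := by positivity
    linarith
  exact lt_of_lt_of_le h1 (le_csInf hne hbound)
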